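/- Let p₀, p₁, …, p_k be affinely independent points in ℝ^k, and let σ denote their convex hull (a full-dimensional k-simplex). Let M(σ) = (b_{ij})_{1 ≤ i,j ≤ k} be the k × k matrix with entries b_{ij} = (‖p_i − p₀‖² + ‖p_j − p₀‖² − ‖p_i − p_j‖²)/2 (so that b_{ij} = ⟨p_i − p₀, p_j − p₀⟩). Then the Lebesgue measure of σ equals (1/k!)·√(|det M(σ)|). In particular, the volume of a simplex is determined by the pairwise distances between its vertices. -/

import Mathlib

open MeasureTheory Pointwise Matrix

noncomputable section

def stdSimp (k : ℕ) : Set (Fin k → ℝ) := {x | (∀ i, 0 ≤ x i) ∧ ∑ i, x i ≤ 1}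

lemma isClosed_stdSimp (k : ℕ) : IsClosed (stdSimp k) := by
  have h1 : IsClosed {x : Fin k → ℝ | ∀ i, 0 ≤ x i} := by
    have : {x : Fin k → ℝ | ∀ i, 0 ≤ x i} = ⋂ i, {x | 0 ≤ x i} := by
      ext x; simp
    rw [this]
    exact isClosed_iInter fun i => isClosed_le continuous_const (continuous_apply i)
  have h2 : IsClosed {x : Fin k → ℝ | ∑ i, x i ≤ 1} :=
    isClosed_le (by fun_prop) continuous_const
  exact h1.inter h2

lemma measurableSet_stdSimp (k : ℕ) : MeasurableSet (stdSimp k) :=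
  (isClosed_stdSimp k).measurableSet

lemma smul_stdSimp (k : ℕ) {c : ℝ} (hc : 0 ≤ c) :
    c • stdSimp k = {x : Fin k → ℝ | (∀ i, 0 ≤ x i) ∧ ∑ i, x i ≤ c} := by
  rcases hc.eq_or_lt with rfl | hc
  · rw [Set.zero_smul_set (⟨0, fun i => le_rfl, by simp⟩ : (stdSimp k).Nonempty)]
    ext x
    simp only [Set.mem_singleton_iff, Set.mem_setOf_eq]
    constructor
    · rintro rfl; simp
    · rintro ⟨h1, h2⟩
      funext i
      have := Finset.single_le_sum (f := x) (fun j _ => h1 j) (Finset.mem_univ i)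
      exact le_antisymm (this.trans h2) (h1 i)
  · ext x
    constructor
    · rintro ⟨y, ⟨hy1, hy2⟩, rfl⟩
      refine ⟨fun i => mul_nonneg hc.le (hy1 i), ?_⟩
      simp only [Pi.smul_apply, smul_eq_mul, ← Finset.mul_sum]
      calc c * ∑ i, y i ≤ c * 1 := by
            exact mul_le_mul_of_nonneg_left hy2 hc.le
        _ = c := mul_one c
    · rintro ⟨h1, h2⟩
      refine ⟨c⁻¹ • x, ⟨fun i => mul_nonneg (inv_nonneg.2 hc.le) (h1 i), ?_⟩, ?_⟩
      · simp only [Pi.smul_apply, smul_eq_mul, ← Finset.mul_sum]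
        rw [inv_mul_le_iff₀ hc, mul_one]
        exact h2
      · show c • c⁻¹ • x = x
        rw [smul_smul, mul_inv_cancel₀ hc.ne', one_smul]

lemma volume_stdSimp (k : ℕ) :
    volume (stdSimp k) = ENNReal.ofReal (1 / (Nat.factorial k : ℝ)) := by
  induction k with
  | zero =>
    have : stdSimp 0 = Set.univ := by
      ext x; simp [stdSimp]
    rw [this, volume_pi, Measure.pi_univ]
    simp
  | succ k ih =>
    -- scaled version in dimension k
    have hscale : ∀ c : ℝ, 0 ≤ c →
        volume {x : Fin k → ℝ | (∀ i, 0 ≤ x i) ∧ ∑ i, x i ≤ c} =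
          ENNReal.ofReal (c ^ k / (Nat.factorial k : ℝ)) := by
      intro c hc
      rw [← smul_stdSimp k hc, Measure.addHaar_smul, ih, ← ENNReal.ofReal_mul (by positivity)]
      congr 1
      rw [show Module.finrank ℝ (Fin k → ℝ) = k by simp,
        abs_of_nonneg (pow_nonneg hc k)]
      ring
    have hmp := measurePreserving_piFinSuccAbove (fun _ : Fin (k + 1) => (volume : Measure ℝ)) 0
    set T : Set (ℝ × (Fin k → ℝ)) :=
      {q | 0 ≤ q.1 ∧ (∀ i, 0 ≤ q.2 i) ∧ q.1 + ∑ i, q.2 i ≤ 1} with hT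
    have hTm : MeasurableSet T := by
      have h1 : MeasurableSet {q : ℝ × (Fin k → ℝ) | 0 ≤ q.1} :=
        measurableSet_le measurable_const measurable_fst
      have h2 : ∀ i : Fin k, MeasurableSet {q : ℝ × (Fin k → ℝ) | 0 ≤ q.2 i} := fun i =>
        measurableSet_le measurable_const (by fun_prop)
      have h3 : MeasurableSet {q : ℝ × (Fin k → ℝ) | q.1 + ∑ i, q.2 i ≤ 1} := by
        refine measurableSet_le (by fun_prop) measurable_const
      have : T = {q | 0 ≤ q.1} ∩ ((⋂ i, {q | 0 ≤ q.2 i}) ∩ {q | q.1 + ∑ i, q.2 i ≤ 1}) := by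
        ext q
        simp only [hT, Set.mem_setOf_eq, Set.mem_inter_iff, Set.mem_iInter]
      rw [this]
      exact h1.inter ((MeasurableSet.iInter h2).inter h3)
    have hpre : (MeasurableEquiv.piFinSuccAbove (fun _ : Fin (k + 1) => ℝ) 0) ⁻¹' T
        = stdSimp (k + 1) := by
      ext x
      simp only [Set.mem_preimage, MeasurableEquiv.piFinSuccAbove, hT, Set.mem_setOf_eq,
        MeasurableEquiv.coe_mk, Fin.insertNthEquiv, Equiv.coe_fn_symm_mk, stdSimp]
      rw [Fin.sum_univ_succ]
      constructor
      · rintro ⟨h0, h1, h2⟩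
        refine ⟨fun i => ?_, h2⟩
        rcases Fin.eq_zero_or_eq_succ i with rfl | ⟨j, rfl⟩
        · exact h0
        · simpa [Fin.tail] using h1 j
      · rintro ⟨h1, h2⟩
        exact ⟨h1 0, fun i => by simpa [Fin.tail] using h1 i.succ, h2⟩
    have key : volume (stdSimp (k + 1)) =
        ((volume : Measure ℝ).prod (volume : Measure (Fin k → ℝ))) T := by
      rw [← hpre,
        show (volume : Measure (Fin (k+1) → ℝ)) = Measure.pi fun _ => volume from volume_pi,
        show (volume : Measure (Fin k → ℝ)) = Measure.pi fun _ => volume from volume_pi]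
      exact hmp.measure_preimage hTm.nullMeasurableSet
    rw [key, Measure.prod_apply hTm]
    have hfiber : ∀ a : ℝ, volume (Prod.mk a ⁻¹' T) =
        Set.indicator (Set.Icc (0:ℝ) 1)
          (fun a => ENNReal.ofReal ((1 - a) ^ k / (Nat.factorial k : ℝ))) a := by
      intro a
      rcases le_or_gt 0 a with ha | ha
      · rcases le_or_gt a 1 with ha1 | ha1
        · rw [Set.indicator_of_mem (Set.mem_Icc.2 ⟨ha, ha1⟩)]
          have : Prod.mk a ⁻¹' T = {y : Fin k → ℝ | (∀ i, 0 ≤ y i) ∧ ∑ i, y i ≤ 1 - a} := by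
            ext y
            simp only [Set.mem_preimage, hT, Set.mem_setOf_eq]
            constructor
            · rintro ⟨_, h1, h2⟩; exact ⟨h1, by linarith⟩
            · rintro ⟨h1, h2⟩; exact ⟨ha, h1, by linarith⟩
          rw [this, hscale _ (by linarith)]
        · rw [Set.indicator_of_notMem (by simp [Set.mem_Icc]; intro; linarith)]
          have : Prod.mk a ⁻¹' T = ∅ := by
            ext y
            simp only [Set.mem_preimage, hT, Set.mem_setOf_eq, Set.mem_empty_iff_false,
              iff_false]
            rintro ⟨_, h1, h2⟩
            have : 0 ≤ ∑ i, y i := Finset.sum_nonneg fun i _ => h1 i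
            linarith
          simp [this]
      · rw [Set.indicator_of_notMem (by simp [Set.mem_Icc]; intro h; linarith)]
        have : Prod.mk a ⁻¹' T = ∅ := by
          ext y
          simp only [Set.mem_preimage, hT, Set.mem_setOf_eq, Set.mem_empty_iff_false, iff_false]
          rintro ⟨h0, _, _⟩
          linarith
        simp [this]
    calc ∫⁻ a, volume (Prod.mk a ⁻¹' T)
        = ∫⁻ a, Set.indicator (Set.Icc (0:ℝ) 1)
            (fun a => ENNReal.ofReal ((1 - a) ^ k / (Nat.factorial k : ℝ))) a := by
          exact lintegral_congr hfiber
      _ = ∫⁻ a in Set.Icc (0:ℝ) 1, ENNReal.ofReal ((1 - a) ^ k / (Nat.factorial k : ℝ)) := by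
          rw [lintegral_indicator measurableSet_Icc]
      _ = ENNReal.ofReal (∫ a in Set.Icc (0:ℝ) 1, (1 - a) ^ k / (Nat.factorial k : ℝ)) := by
          rw [← ofReal_integral_eq_lintegral_ofReal]
          · exact (Continuous.integrableOn_Icc (by fun_prop))
          · filter_upwards [ae_restrict_mem measurableSet_Icc] with a ha
            exact div_nonneg (pow_nonneg (by linarith [ha.2]) k) (by positivity)
      _ = ENNReal.ofReal (1 / (Nat.factorial (k + 1) : ℝ)) := by
          congr 1
          rw [MeasureTheory.integral_Icc_eq_integral_Ioc,
            ← intervalIntegral.integral_of_le (by norm_num : (0:ℝ) ≤ 1)]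
          have h1 : ∫ a in (0:ℝ)..1, (1 - a) ^ k / (Nat.factorial k : ℝ)
              = (∫ a in (0:ℝ)..1, (1 - a) ^ k) / (Nat.factorial k : ℝ) := by
            simp [intervalIntegral.integral_div]
          rw [h1]
          have h2 : ∫ a in (0:ℝ)..1, (1 - a) ^ k = ∫ a in (0:ℝ)..1, a ^ k := by
            have := intervalIntegral.integral_comp_sub_left (a := (0:ℝ)) (b := 1)
              (fun x => x ^ k) 1
            simpa using this
          rw [h2, integral_pow]
          rw [Nat.factorial_succ]
          push_cast
          field_simp
          simp

lemma stdSimp_def (k : ℕ) : stdSimp k = {x | (∀ i, 0 ≤ x i) ∧ ∑ i, x i ≤ 1} := rfl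

variable {k : ℕ}


def combo (v : Fin k → EuclideanSpace ℝ (Fin k)) :
    EuclideanSpace ℝ (Fin k) →ₗ[ℝ] EuclideanSpace ℝ (Fin k) where
  toFun x := ∑ i, x i • v i
  map_add' x y := by
    simp only [PiLp.add_apply, add_smul, Finset.sum_add_distrib]
  map_smul' c x := by
    simp only [PiLp.smul_apply, smul_eq_mul, RingHom.id_apply, Finset.smul_sum, smul_smul]

theorem volume_simplex_from_distances
    (k : ℕ) (p : Fin (k + 1) → EuclideanSpace ℝ (Fin k))
    (hind : AffineIndependent ℝ p)
    (M : Matrix (Fin k) (Fin k) ℝ)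
    (hM : ∀ i j : Fin k, M i j =
      (‖p i.succ - p 0‖ ^ 2 + ‖p j.succ - p 0‖ ^ 2 - ‖p i.succ - p j.succ‖ ^ 2) / 2) :
    MeasureTheory.volume (convexHull ℝ (Set.range p)) =
      ENNReal.ofReal ((1 / (Nat.factorial k : ℝ)) * Real.sqrt |M.det|) := by
  set v : Fin k → EuclideanSpace ℝ (Fin k) := fun i => p i.succ - p 0 with hv
  set b := (EuclideanSpace.basisFun (Fin k) ℝ).toBasis with hb
  set A : Matrix (Fin k) (Fin k) ℝ := LinearMap.toMatrix b b (combo v) with hAdef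
  have hA : ∀ l i, A l i = v i l := by
    intro l i
    rw [hAdef, LinearMap.toMatrix_apply]
    simp [combo, hb, EuclideanSpace.basisFun_apply, EuclideanSpace.single_apply]
  -- M is the Gram matrix
  have hMA : M = Aᵀ * A := by
    ext i j
    rw [hM, Matrix.mul_apply]
    have key : ∀ a b : EuclideanSpace ℝ (Fin k),
        (‖a‖ ^ 2 + ‖b‖ ^ 2 - ‖a - b‖ ^ 2) / 2 = (inner ℝ a b : ℝ) := by
      intro a b
      rw [@norm_sub_sq_real]
      ring
    have hsub : p i.succ - p j.succ = v i - v j := by rw [hv]; exact (sub_sub_sub_cancel_right _ _ _).symm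
    rw [hsub, show p i.succ - p 0 = v i from rfl, show p j.succ - p 0 = v j from rfl, key]
    simp only [Matrix.transpose_apply, hA]
    rw [PiLp.inner_apply]
    simp [RCLike.inner_apply]
    exact Finset.sum_congr rfl fun _ _ => mul_comm _ _
  have hdetM : Real.sqrt |M.det| = |A.det| := by
    rw [hMA, Matrix.det_mul, Matrix.det_transpose, ← sq, abs_pow, Real.sqrt_sq_eq_abs, abs_abs]
  have hdetf : LinearMap.det (combo v) = A.det := by
    rw [hAdef, LinearMap.det_toMatrix]
  -- the set S' in E corresponding to the standard simplex
  set S' : Set (EuclideanSpace ℝ (Fin k)) := {x : EuclideanSpace ℝ (Fin k) | (∀ i, 0 ≤ x i) ∧ ∑ i, x i ≤ 1} with hS'def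
  have hS'vol : volume S' = ENNReal.ofReal (1 / (Nat.factorial k : ℝ)) := by
    have h := (EuclideanSpace.volume_preserving_symm_measurableEquiv_toLp (ι := Fin k)).measure_preimage
      (measurableSet_stdSimp k).nullMeasurableSet
    have hpre : (MeasurableEquiv.toLp 2 (Fin k → ℝ)).symm ⁻¹' (stdSimp k) = S' := by
      rw [stdSimp_def]; rfl
    rw [hpre] at h
    rw [h, volume_stdSimp]
  have hS'conv : Convex ℝ S' := by
    intro x hx y hy a c ha hc hac
    refine ⟨fun i => ?_, ?_⟩
    · have : (a • x + c • y) i = a * x i + c * y i := rfl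
      rw [this]
      exact add_nonneg (mul_nonneg ha (hx.1 i)) (mul_nonneg hc (hy.1 i))
    · have : ∑ i, (a • x + c • y) i = a * ∑ i, x i + c * ∑ i, y i := by
        simp [Finset.sum_add_distrib, Finset.mul_sum, PiLp.add_apply, PiLp.smul_apply,
          smul_eq_mul]
      rw [this]
      calc a * ∑ i, x i + c * ∑ i, y i ≤ a * 1 + c * 1 := by
            gcongr
            exacts [hx.2, hy.2]
        _ = 1 := by rw [mul_one, mul_one, hac]
  -- the convex hull is the translated linear image of S'
  have hhull : convexHull ℝ (Set.range p) = (fun x => p 0 + x) '' (combo v '' S') := by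
    apply le_antisymm
    · apply convexHull_min
      · rintro _ ⟨j, rfl⟩
        induction j using Fin.cases with
        | zero =>
          refine ⟨combo v 0, ⟨0, ⟨fun i => le_rfl, by simp⟩, rfl⟩, ?_⟩
          simp
        | succ j =>
          refine ⟨combo v (WithLp.toLp 2 (fun i => if i = j then (1:ℝ) else 0)), ⟨_, ⟨fun i => by positivity,
            by simp⟩, rfl⟩, ?_⟩
          have : combo v (WithLp.toLp 2 (fun i => if i = j then (1:ℝ) else 0)) = v j := by
            simp [combo, ite_smul]
          rw [this]
          show p 0 + (p j.succ - p 0) = p j.succ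
          abel
      · exact ((hS'conv.linear_image (combo v)).translate (p 0))
    · rintro _ ⟨_, ⟨w, ⟨hw1, hw2⟩, rfl⟩, rfl⟩
      have hmem := (convex_convexHull ℝ (Set.range p)).sum_mem (t := Finset.univ)
        (w := Fin.cons (α := fun _ => ℝ) (1 - ∑ i, w i) w) (z := p)
        (fun i _ => by
          induction i using Fin.cases with
          | zero => simpa using by linarith
          | succ j => simpa using hw1 j)
        (by rw [Fin.sum_cons]; ring)
        (fun i _ => subset_convexHull ℝ _ (Set.mem_range_self i))
      have heq : ∑ i, Fin.cons (α := fun _ => ℝ) (1 - ∑ i, w i) w i • p i = p 0 + combo v w := by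
        rw [Fin.sum_univ_succ]
        simp only [Fin.cons_zero, Fin.cons_succ, combo, LinearMap.coe_mk, AddHom.coe_mk, hv,
          smul_sub, Finset.sum_sub_distrib, sub_smul, one_smul, ← Finset.sum_smul]
        abel
      show p 0 + (combo v) w ∈ _
      rw [← heq]
      exact hmem
  rw [hhull]
  have h1 : volume ((fun x => p 0 + x) '' (combo v '' S')) = volume (combo v '' S') := by
    rw [show (fun x => p 0 + x) = (fun x => p 0 +ᵥ x) from rfl, Set.image_vadd]
    exact measure_vadd _ _ _
  rw [h1, Measure.addHaar_image_linearMap, hdetf, hS'vol,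
    ← ENNReal.ofReal_mul (abs_nonneg _), hdetM]
  congr 1
  ring
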